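/- Let (X, d_S) and (Y, d_D) be metric spaces, let τ > 0, θ > 0, δ ≥ 0, L ≥ 0, let F : X → ℝ, and let B : X → Y satisfy d_D(B(x), B(x')) ≤ L · d_S(x, x') for all x, x' ∈ X. Fix u_k ∈ X and v ∈ Y, and suppose u_{k+1} ∈ X minimizes the functional u ↦ F(u) + (1/(2τ)) ( d_S(u, u_k)² + d_D(B(u), v)²/θ ) over X, and that d_D(B(u_{k+1}), v) ≤ δ. Then F(u_{k+1}) + (1/(2τ)) (1 − 2L²/θ) d_S(u_k, u_{k+1})² ≤ F(u_k) + δ²/(2θτ). -/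

import Mathlib

/-- Perturbed energy estimate for one step of the data-driven minimizing
movement (daJKO) scheme. -/
theorem daJKO_energy_estimate {X Y : Type*} [MetricSpace X] [MetricSpace Y]
    (τ θ δ L : ℝ) (hτ : 0 < τ) (hθ : 0 < θ) (hδ : 0 ≤ δ) (hL : 0 ≤ L)
    (F : X → ℝ) (B : X → Y)
    (hB : ∀ x x' : X, dist (B x) (B x') ≤ L * dist x x')
    (uk : X) (v : Y) (uk1 : X)
    (hmin : ∀ u : X,
      F uk1 + 1 / (2 * τ) * (dist uk1 uk ^ 2 + dist (B uk1) v ^ 2 / θ)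
        ≤ F u + 1 / (2 * τ) * (dist u uk ^ 2 + dist (B u) v ^ 2 / θ))
    (hdata : dist (B uk1) v ≤ δ) :
    F uk1 + 1 / (2 * τ) * (1 - 2 * L ^ 2 / θ) * dist uk uk1 ^ 2
      ≤ F uk + δ ^ 2 / (2 * θ * τ) := by
  have h := hmin uk
  rw [dist_self uk] at h
  rw [dist_comm uk uk1]
  set d := dist uk1 uk with hdef
  set b := dist (B uk1) v with hbdef
  set a := dist (B uk) v with hadef
  have hd0 : (0:ℝ) ≤ d := dist_nonneg
  have hb0 : (0:ℝ) ≤ b := dist_nonneg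
  have ha0 : (0:ℝ) ≤ a := dist_nonneg
  have htri : a ≤ L * d + b := by
    calc a ≤ dist (B uk) (B uk1) + b := dist_triangle _ _ _
      _ ≤ L * d + b := by
          have := hB uk uk1
          rw [dist_comm uk uk1] at this
          linarith
  have hsq : a ^ 2 ≤ 2 * L ^ 2 * d ^ 2 + 2 * b ^ 2 := by
    nlinarith [sq_nonneg (L * d - b)]
  have hbsq : b ^ 2 ≤ δ ^ 2 := by nlinarith
  have hA : (0:ℝ) < 1 / (2 * τ) := by positivity
  have hT : (0:ℝ) < 1 / θ := by positivity
  have e1 : a ^ 2 / θ = a ^ 2 * (1/θ) := by ring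
  have e2 : b ^ 2 / θ = b ^ 2 * (1/θ) := by ring
  rw [e1, e2] at h
  have e3 : δ ^ 2 / (2 * θ * τ) = δ ^ 2 * (1/θ) * (1 / (2 * τ)) := by
    rw [div_eq_iff (by positivity : (2 * θ * τ:ℝ) ≠ 0)]
    field_simp
  have e4 : 1 / (2 * τ) * (1 - 2 * L ^ 2 / θ) * d ^ 2
      = 1 / (2 * τ) * d ^ 2 - 2 * L ^ 2 * d ^ 2 * (1/θ) * (1 / (2 * τ)) := by
    field_simp
  rw [e3, e4]
  nlinarith [mul_le_mul_of_nonneg_left hsq (le_of_lt (mul_pos hT hA)),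
    mul_le_mul_of_nonneg_left hbsq (le_of_lt (mul_pos hT hA))]
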